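/- Let n ≥ 5. There do not exist formal power series g, f over ℤ/3ℤ with constant term of f equal to 0 and an index t ∈ {0,1,…,n−1} such that the n×n matrix S = L − Lᵀ, where L is the matrix with (i,j)-entry equal to the coefficient of z^i in z·g·f^j (0 ≤ i,j ≤ n−1), satisfies: S(j,t) = 0 for all j, and S(j,k) ≠ 0 for all j ≠ k with j ≠ t and k ≠ t. In other words, no orientation of the graph K_{n−1} ∪ K_1 (a complete graph on n−1 vertices together with one isolated vertex) is an oriented Riordan graph. -/

import Mathlib

open PowerSeries Matrix

/-- The `n × n` matrix `(zg, f)_n` whose `(i,j)`-entry (0-indexed) is the coefficient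
of `z^i` in `z·g·f^j`. -/
noncomputable def riordanMat (n : ℕ) (g f : PowerSeries (ZMod 3)) :
    Matrix (Fin n) (Fin n) (ZMod 3) :=
  Matrix.of fun i j => coeff (R := ZMod 3) (i : ℕ) (X * g * f ^ (j : ℕ))

lemma riordan_coeff (g h : PowerSeries (ZMod 3)) (i j : ℕ) :
    coeff (R := ZMod 3) i (X * g * (X * h) ^ j) =
      if j + 1 ≤ i then coeff (R := ZMod 3) (i - (j + 1)) (g * h ^ j) else 0 := by
  have e : X * g * (X * h) ^ j = g * h ^ j * X ^ (j + 1) := by ring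
  rw [e, PowerSeries.coeff_mul_X_pow']

lemma riordan_le (n : ℕ) (g h : PowerSeries (ZMod 3)) (i j : Fin n)
    (hij : (i : ℕ) ≤ (j : ℕ)) : riordanMat n g (X * h) i j = 0 := by
  simp only [riordanMat, Matrix.of_apply, riordan_coeff]
  rw [if_neg (by omega)]

lemma riordan_succ (n : ℕ) (g h : PowerSeries (ZMod 3)) (i j : Fin n)
    (hij : (i : ℕ) = (j : ℕ) + 1) :
    riordanMat n g (X * h) i j =
      constantCoeff (R := ZMod 3) g * constantCoeff (R := ZMod 3) h ^ (j : ℕ) := by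
  simp only [riordanMat, Matrix.of_apply, riordan_coeff]
  rw [if_pos (by omega), hij, Nat.sub_self, coeff_zero_eq_constantCoeff,
    _root_.map_mul, map_pow]

/-- For `n ≥ 5`, no orientation of `K_{n−1} ∪ K_1` is an oriented Riordan graph:
there are no power series `g`, `f` over `ℤ/3ℤ` with `f(0) = 0` and a vertex `t`
such that in `S = (zg,f)_n − (zg,f)_nᵀ` the row/column of `t` vanishes while all
other off-diagonal entries are nonzero. -/
theorem no_orientation_of_KnSubOne_union_K1_is_riordan (n : ℕ) (hn : 5 ≤ n) :
    ¬ ∃ (g f : PowerSeries (ZMod 3)) (t : Fin n),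
        constantCoeff (R := ZMod 3) f = 0 ∧
        (∀ j : Fin n, (riordanMat n g f - (riordanMat n g f)ᵀ) j t = 0) ∧
        (∀ j k : Fin n, j ≠ k → j ≠ t → k ≠ t →
          (riordanMat n g f - (riordanMat n g f)ᵀ) j k ≠ 0) := by
  rintro ⟨g, f, t, hf0, hcol, hedge⟩
  obtain ⟨h, rfl⟩ : ∃ h, f = X * h := PowerSeries.X_dvd_iff.mpr hf0
  have hS : ∀ i j : Fin n, (riordanMat n g (X * h) - (riordanMat n g (X * h))ᵀ) i j
      = riordanMat n g (X * h) i j - riordanMat n g (X * h) j i := by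
    intro i j; simp [Matrix.sub_apply, Matrix.transpose_apply]
  rcases lt_or_ge (t : ℕ) 2 with ht | ht
  · -- t = 0 or t = 1 : in both cases constantCoeff g = 0
    have hg0 : constantCoeff (R := ZMod 3) g = 0 := by
      have ht01 : (t : ℕ) = 0 ∨ (t : ℕ) = 1 := by omega
      rcases ht01 with ht0 | ht1
      · have := hcol ⟨1, by omega⟩
        rw [hS, riordan_succ n g h _ t (by simp [ht0]),
          riordan_le n g h t _ (by simp [ht0])] at this
        simpa [ht0] using this
      · have := hcol ⟨0, by omega⟩
        rw [hS, riordan_le n g h _ t (by simp [ht1]),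
          riordan_succ n g h t _ (by simp [ht1]), zero_sub, neg_eq_zero] at this
        simpa using this
    -- edge (3,2) must be nonzero, but it equals g0 * h0^2 = 0
    have := hedge ⟨3, by omega⟩ ⟨2, by omega⟩
      (Fin.ne_of_val_ne (show (3:ℕ) ≠ 2 by omega))
      (Fin.ne_of_val_ne (show (3:ℕ) ≠ (t:ℕ) by omega))
      (Fin.ne_of_val_ne (show (2:ℕ) ≠ (t:ℕ) by omega))
    rw [hS, riordan_succ n g h _ _ (by simp), riordan_le n g h _ _ (by simp)] at this
    exact this (by rw [hg0]; ring)
  · -- t ≥ 2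
    have hg0 : constantCoeff (R := ZMod 3) g ≠ 0 := by
      have := hedge ⟨1, by omega⟩ ⟨0, by omega⟩
        (Fin.ne_of_val_ne (show (1:ℕ) ≠ 0 by omega))
        (Fin.ne_of_val_ne (show (1:ℕ) ≠ (t:ℕ) by omega))
        (Fin.ne_of_val_ne (show (0:ℕ) ≠ (t:ℕ) by omega))
      rw [hS, riordan_succ n g h _ _ (by simp), riordan_le n g h _ _ (by simp)] at this
      simpa using this
    have hh0 : constantCoeff (R := ZMod 3) h = 0 := by
      have := hcol ⟨(t : ℕ) - 1, by omega⟩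
      rw [hS, riordan_le n g h _ t (show (t:ℕ)-1 ≤ (t:ℕ) by omega),
        riordan_succ n g h t _ (show (t:ℕ) = (t:ℕ)-1 + 1 by omega),
        zero_sub, neg_eq_zero] at this
      rcases mul_eq_zero.mp this with hc | hc
      · exact absurd hc hg0
      · exact (pow_eq_zero_iff (show (t:ℕ)-1 ≠ 0 by omega)).mp hc
    rcases eq_or_lt_of_le ht with ht2 | ht3
    · -- t = 2 : use edge (4,3)
      have := hedge ⟨4, by omega⟩ ⟨3, by omega⟩
        (Fin.ne_of_val_ne (show (4:ℕ) ≠ 3 by omega))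
        (Fin.ne_of_val_ne (show (4:ℕ) ≠ (t:ℕ) by omega))
        (Fin.ne_of_val_ne (show (3:ℕ) ≠ (t:ℕ) by omega))
      rw [hS, riordan_succ n g h _ _ (by simp), riordan_le n g h _ _ (by simp)] at this
      exact this (by rw [hh0]; simp)
    · -- t ≥ 3 : use edge (2,1)
      have := hedge ⟨2, by omega⟩ ⟨1, by omega⟩
        (Fin.ne_of_val_ne (show (2:ℕ) ≠ 1 by omega))
        (Fin.ne_of_val_ne (show (2:ℕ) ≠ (t:ℕ) by omega))
        (Fin.ne_of_val_ne (show (1:ℕ) ≠ (t:ℕ) by omega))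
      rw [hS, riordan_succ n g h _ _ (by simp), riordan_le n g h _ _ (by simp)] at this
      exact this (by rw [hh0]; simp)
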